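/- Let n ≥ 1 and let V and W be irreducible (simple) finite-dimensional complex representations of G = Equiv.Perm (Fin n) with characters χ_V and χ_W. Define P(q) = ∑_{π ∈ G} q^{c(π)} · χ_V(π) · χ_W(π) for q : ℕ, where c(π) is the number of orbits of π acting on Fin n. Then there exists a natural number q₊ with 1 ≤ q₊ ≤ n such that: for every q ≥ q₊, P(q) is a positive real number (its imaginary part is zero and its real part is strictly positive), and for every q with 0 ≤ q < q₊, P(q) = 0. Moreover, if V and W are not isomorphic, then q₊ ≥ 2. -/

import Mathlib

open CategoryTheory

/-- The number of cycles of a permutation `π` of `Fin n`, counting fixed points as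
cycles of length 1: the number of orbits of the action of `π` on `Fin n`. -/
noncomputable def cycleCount {n : ℕ} (π : Equiv.Perm (Fin n)) : ℕ :=
  Nat.card (MulAction.orbitRel.Quotient (Subgroup.zpowers π) (Fin n))

namespace CharPolyAux

open MonoidalCategory

variable {n q : ℕ}

lemma fixed_zpow {f : Fin n → Fin q} {π : Equiv.Perm (Fin n)}
    (hf : f ∘ ⇑π = f) : ∀ (k : ℤ) (x : Fin n), f ((π ^ k) x) = f x := by
  have h1 : ∀ x, f (π x) = f x := fun x => congrFun hf x
  have h2 : ∀ x, f (π⁻¹ x) = f x := fun x => by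
    have := h1 (π⁻¹ x)
    rw [(by exact π.apply_symm_apply x : π (π⁻¹ x) = x)] at this
    exact this.symm
  intro k
  induction k using Int.induction_on with
  | zero => simp
  | succ i ih =>
    intro x
    rw [zpow_add_one, Equiv.Perm.mul_apply, ih, h1]
  | pred i ih =>
    intro x
    rw [zpow_sub_one, Equiv.Perm.mul_apply, ih, h2]

/-- Functions fixed by `π` correspond to functions on the orbit space of `π`. -/
noncomputable def fixedEquiv (π : Equiv.Perm (Fin n)) :
    {f : Fin n → Fin q // f ∘ ⇑π = f} ≃
      (MulAction.orbitRel.Quotient (Subgroup.zpowers π) (Fin n) → Fin q) where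
  toFun f := Quotient.lift f.1 (by
    intro a b hab
    obtain ⟨g, hg⟩ := hab
    obtain ⟨k, hk⟩ := Subgroup.mem_zpowers_iff.mp g.2
    have : (π ^ k) b = a := by rw [hk]; exact hg
    rw [← this]
    exact fixed_zpow f.2 k b)
  invFun g := ⟨fun x => g (Quotient.mk'' x), by
    funext x
    exact congrArg g (Quotient.sound' ⟨⟨π, Subgroup.mem_zpowers π⟩, rfl⟩)⟩
  left_inv f := Subtype.ext rfl
  right_inv g := funext fun z => Quotient.inductionOn' z fun x => rfl

lemma card_fixed (π : Equiv.Perm (Fin n)) :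
    Nat.card {f : Fin n → Fin q // f ∘ ⇑π = f} = q ^ cycleCount π := by
  rw [Nat.card_congr (fixedEquiv π), Nat.card_fun, Nat.card_eq_fintype_card,
    Fintype.card_fin, cycleCount]

/-- The stabilizer of `f : Fin n → Fin q` in `Perm (Fin n)`. -/
def stab (f : Fin n → Fin q) : Subgroup (Equiv.Perm (Fin n)) where
  carrier := {π | f ∘ ⇑π = f}
  one_mem' := by
    show f ∘ ⇑(1 : Equiv.Perm (Fin n)) = f
    simp
  mul_mem' := by
    intro a b ha hb
    show f ∘ ⇑(a * b) = f
    rw [Equiv.Perm.coe_mul, ← Function.comp_assoc, ha, hb]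
  inv_mem' := by
    intro a ha
    show f ∘ ⇑a⁻¹ = f
    funext x
    have h := congrFun ha (a⁻¹ x)
    rw [Function.comp_apply, (by exact a.apply_symm_apply x : a (a⁻¹ x) = x)] at h
    exact h.symm

lemma mem_stab {f : Fin n → Fin q} {π : Equiv.Perm (Fin n)} :
    π ∈ stab f ↔ f ∘ ⇑π = f := Iff.rfl

variable (V W : FDRep ℂ (Equiv.Perm (Fin n)))

/-- The local contribution of `f`: `|stab f| · dim ((V ⊗ W)^{stab f})`. -/
noncomputable def m (f : Fin n → Fin q) : ℕ :=
  Nat.card ↥(stab f) *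
    Module.finrank ℂ (Representation.invariants
      (FDRep.of ((V ⊗ W).ρ.comp (stab f).subtype)).ρ)

lemma sum_stab_char (f : Fin n → Fin q) [Fintype ↥(stab f)] :
    ∑ h : ↥(stab f), (V ⊗ W).character (h : Equiv.Perm (Fin n)) = (m V W f : ℂ) := by
  haveI : Invertible ((Fintype.card ↥(stab f) : ℂ)) :=
    invertibleOfNonzero (Nat.cast_ne_zero.mpr Fintype.card_ne_zero)
  have h := FDRep.average_char_eq_finrank_invariants
    (FDRep.of ((V ⊗ W).ρ.comp (stab f).subtype))
  have hchar : ∀ h : ↥(stab f),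
      (FDRep.of ((V ⊗ W).ρ.comp (stab f).subtype)).character h
        = (V ⊗ W).character (h : Equiv.Perm (Fin n)) := fun h => rfl
  rw [Finset.sum_congr rfl (fun h _ => hchar h)] at h
  rw [inv_mul_eq_iff_eq_mul₀ (Nat.cast_ne_zero.mpr Nat.card_pos.ne')] at h
  refine h.trans ?_
  rw [m, Nat.cast_mul]

/-- The total count `N q = ∑_f m f`. -/
noncomputable def N (q : ℕ) : ℕ := ∑ f : Fin n → Fin q, m V W f

lemma P_eq (q : ℕ) :
    ∑ π : Equiv.Perm (Fin n), (q : ℂ) ^ cycleCount π * V.character π * W.character π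
      = (N V W q : ℂ) := by
  have hcard : ∀ π : Equiv.Perm (Fin n),
      ((q : ℂ)) ^ cycleCount π
        = ∑ f : Fin n → Fin q, if f ∘ ⇑π = f then (1 : ℂ) else 0 := by
    intro π
    have h1 : q ^ cycleCount π
        = (Finset.univ.filter (fun f : Fin n → Fin q => f ∘ ⇑π = f)).card := by
      rw [← card_fixed π, Nat.card_eq_fintype_card, Fintype.card_subtype]
    calc ((q : ℂ)) ^ cycleCount π = ((q ^ cycleCount π : ℕ) : ℂ) := by push_cast; ring
    _ = _ := by
      rw [h1, Finset.card_filter]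
      push_cast
      exact Finset.sum_congr rfl fun f _ => by split <;> simp
  calc ∑ π : Equiv.Perm (Fin n), (q : ℂ) ^ cycleCount π * V.character π * W.character π
      = ∑ π : Equiv.Perm (Fin n),
          (∑ f : Fin n → Fin q, if f ∘ ⇑π = f then (1 : ℂ) else 0)
            * (V ⊗ W).character π := by
        refine Finset.sum_congr rfl fun π _ => ?_
        rw [FDRep.char_tensor, Pi.mul_apply, ← hcard π, mul_assoc]
    _ = ∑ π : Equiv.Perm (Fin n), ∑ f : Fin n → Fin q,
          (if f ∘ ⇑π = f then (V ⊗ W).character π else 0) := by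
        refine Finset.sum_congr rfl fun π _ => ?_
        rw [Finset.sum_mul]
        exact Finset.sum_congr rfl fun f _ => by rw [ite_mul, one_mul, zero_mul]
    _ = ∑ f : Fin n → Fin q, ∑ π : Equiv.Perm (Fin n),
          (if f ∘ ⇑π = f then (V ⊗ W).character π else 0) := Finset.sum_comm
    _ = ∑ f : Fin n → Fin q, (m V W f : ℂ) := by
        refine Finset.sum_congr rfl fun f _ => ?_
        haveI : Fintype ↥(stab f) := Fintype.ofFinite _
        rw [← sum_stab_char V W f, ← Finset.sum_filter]
        exact Finset.sum_subtype _ (fun π => by simp [mem_stab]) _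
    _ = (N V W q : ℂ) := by rw [N, Nat.cast_sum]

lemma stab_comp {q' : ℕ} (h : q ≤ q') (f : Fin n → Fin q) :
    stab ((Fin.castLE h) ∘ f) = stab f := by
  ext π
  simp only [mem_stab]
  constructor
  · intro hh
    funext x
    exact Fin.castLE_injective h (congrFun hh x)
  · intro hh
    rw [Function.comp_assoc, hh]

lemma m_comp {q' : ℕ} (h : q ≤ q') (f : Fin n → Fin q) :
    m V W ((Fin.castLE h) ∘ f) = m V W f := by
  unfold m
  rw [stab_comp h f]

lemma N_mono {q' : ℕ} (h : q ≤ q') : N V W q ≤ N V W q' := by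
  have hinj : Function.Injective (fun f : Fin n → Fin q => (Fin.castLE h) ∘ f) :=
    fun a b hab => funext fun x => Fin.castLE_injective h (congrFun hab x)
  calc N V W q = ∑ f : Fin n → Fin q, m V W ((Fin.castLE h) ∘ f) := by
        rw [N]; exact Finset.sum_congr rfl fun f _ => (m_comp V W h f).symm
    _ = ∑ f' ∈ Finset.univ.image (fun f : Fin n → Fin q => (Fin.castLE h) ∘ f), m V W f' :=
        (Finset.sum_image fun a _ b _ hab => hinj hab).symm
    _ ≤ ∑ f' : Fin n → Fin q', m V W f' :=
        Finset.sum_le_sum_of_subset (Finset.subset_univ _)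
    _ = N V W q' := rfl

lemma stab_id : stab (id : Fin n → Fin n) = ⊥ := by
  ext π
  rw [mem_stab, Subgroup.mem_bot, Function.id_comp]
  constructor
  · intro h
    exact Equiv.ext fun x => congrFun h x
  · intro h
    rw [h]
    rfl

lemma finrank_ne_zero_of_simple {G : Type} [Group G] [Fintype G]
    (X : FDRep ℂ G) (hX : Simple X) : Module.finrank ℂ X ≠ 0 := by
  intro h0
  haveI := hX
  haveI hsub : Subsingleton X := Module.finrank_zero_iff.mp h0
  letI : Fintype G := (inferInstance : Fintype G)
  haveI : Invertible ((Fintype.card G : ℂ)) :=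
    invertibleOfNonzero (Nat.cast_ne_zero.mpr Fintype.card_ne_zero)
  have h := FDRep.char_orthonormal (k := ℂ) (G := G) X X
  rw [if_pos ⟨Iso.refl X⟩] at h
  have hz : ∀ g : G, X.character g = 0 := by
    intro g
    show LinearMap.trace ℂ X (X.ρ g) = 0
    rw [Subsingleton.elim (X.ρ g) 0, map_zero]
  rw [Finset.sum_congr rfl (fun g _ => by rw [hz g, zero_mul])] at h
  rw [Finset.sum_const_zero, mul_zero] at h
  exact zero_ne_one h

variable {V W}

lemma m_id_pos (hV : Simple V) (hW : Simple W) : 0 < m V W (id : Fin n → Fin n) := by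
  rcases Nat.eq_zero_or_pos (m V W (id : Fin n → Fin n)) with h0 | h
  · exfalso
    haveI : Fintype ↥(stab (id : Fin n → Fin n)) := Fintype.ofFinite _
    have hs := sum_stab_char V W (id : Fin n → Fin n)
    rw [h0] at hs
    have hone : ∀ h : ↥(stab (id : Fin n → Fin n)), (h : Equiv.Perm (Fin n)) = 1 := by
      intro h
      have h2 : (id : Fin n → Fin n) ∘ ⇑(h : Equiv.Perm (Fin n)) = id := h.2
      rw [Function.id_comp] at h2
      exact Equiv.ext fun x => congrFun h2 x
    rw [Finset.sum_congr rfl (fun h _ => by rw [hone h])] at hs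
    rw [Finset.sum_const, Nat.cast_zero] at hs
    have hcard : ((Fintype.card ↥(stab (id : Fin n → Fin n)) : ℂ)) ≠ 0 :=
      Nat.cast_ne_zero.mpr Fintype.card_ne_zero
    have hchar1 : (V ⊗ W).character 1 ≠ 0 := by
      rw [FDRep.char_tensor, Pi.mul_apply, FDRep.char_one, FDRep.char_one]
      exact mul_ne_zero
        (Nat.cast_ne_zero.mpr (finrank_ne_zero_of_simple V hV))
        (Nat.cast_ne_zero.mpr (finrank_ne_zero_of_simple W hW))
    rw [nsmul_eq_mul] at hs
    exact (mul_ne_zero hcard hchar1) hs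
  · exact h

lemma N_n_pos (hn : 1 ≤ n) (hV : Simple V) (hW : Simple W) : 0 < N V W n := by
  have : m V W (id : Fin n → Fin n) ≤ N V W n :=
    Finset.single_le_sum (f := fun f : Fin n → Fin n => m V W f)
      (fun _ _ => Nat.zero_le _) (Finset.mem_univ _)
  exact lt_of_lt_of_le (m_id_pos hV hW) this

lemma N_zero (hn : 1 ≤ n) : N V W 0 = 0 := by
  haveI : IsEmpty (Fin n → Fin 0) := ⟨fun f => (f ⟨0, hn⟩).elim0⟩
  rw [N, Finset.univ_eq_empty, Finset.sum_empty]

lemma char_self_inv (X : FDRep ℂ (Equiv.Perm (Fin n))) (g : Equiv.Perm (Fin n)) :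
    X.character g⁻¹ = X.character g := by
  have hconj : IsConj g g⁻¹ :=
    Equiv.Perm.isConj_iff_cycleType_eq.mpr (Equiv.Perm.cycleType_inv g).symm
  obtain ⟨c, hc⟩ := isConj_iff.mp hconj
  rw [← hc, FDRep.char_conj]

lemma N_one_eq_zero (hV : Simple V) (hW : Simple W) (hiso : IsEmpty (V ≅ W)) :
    N V W 1 = 0 := by
  haveI := hV; haveI := hW
  have horth : ∑ g : Equiv.Perm (Fin n), V.character g * W.character g⁻¹ = 0 := by
    letI : Fintype (Equiv.Perm (Fin n)) :=
      (inferInstance : Fintype (Equiv.Perm (Fin n)))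
    haveI : Invertible ((Fintype.card (Equiv.Perm (Fin n)) : ℂ)) :=
      invertibleOfNonzero (Nat.cast_ne_zero.mpr Fintype.card_ne_zero)
    have h := FDRep.char_orthonormal (k := ℂ) (G := Equiv.Perm (Fin n)) V W
    rw [if_neg (fun hne => hiso.false hne.some)] at h
    exact (mul_eq_zero.mp (h.trans (by simp))).resolve_left
      (inv_ne_zero (Nat.cast_ne_zero.mpr Nat.card_pos.ne'))
  have hP : ∑ π : Equiv.Perm (Fin n),
      (1 : ℂ) ^ cycleCount π * V.character π * W.character π = 0 := by
    calc ∑ π : Equiv.Perm (Fin n), (1 : ℂ) ^ cycleCount π * V.character π * W.character π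
        = ∑ π : Equiv.Perm (Fin n), V.character π * W.character π⁻¹ := by
          refine Finset.sum_congr rfl fun π _ => ?_
          rw [one_pow, one_mul, char_self_inv W]
      _ = 0 := horth
  have := P_eq V W 1
  rw [Nat.cast_one] at this
  rw [this] at hP
  exact_mod_cast hP

end CharPolyAux

/-- The character polynomial `P(q) = ∑_π q^{c(π)} χ_V(π) χ_W(π)` of two irreducible
representations `V`, `W` of `S_n` (`n ≥ 1`) has a threshold `q₊` with `1 ≤ q₊ ≤ n`:
`P(q)` is a strictly positive real for all `q ≥ q₊` and vanishes for `0 ≤ q < q₊`;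
moreover `q₊ ≥ 2` when `V` and `W` are not isomorphic. -/
theorem character_polynomial_threshold (n : ℕ) (hn : 1 ≤ n)
    (V W : FDRep ℂ (Equiv.Perm (Fin n))) (hV : Simple V) (hW : Simple W) :
    ∃ qp : ℕ, 1 ≤ qp ∧ qp ≤ n ∧
      (∀ q : ℕ, qp ≤ q →
        (∑ π : Equiv.Perm (Fin n),
            (q : ℂ) ^ cycleCount π * V.character π * W.character π).im = 0 ∧
        0 < (∑ π : Equiv.Perm (Fin n),
            (q : ℂ) ^ cycleCount π * V.character π * W.character π).re) ∧
      (∀ q : ℕ, q < qp →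
        ∑ π : Equiv.Perm (Fin n),
            (q : ℂ) ^ cycleCount π * V.character π * W.character π = 0) ∧
      (IsEmpty (V ≅ W) → 2 ≤ qp) := by
  classical
  have hex : ∃ q : ℕ, CharPolyAux.N V W q ≠ 0 :=
    ⟨n, (CharPolyAux.N_n_pos hn hV hW).ne'⟩
  refine ⟨Nat.find hex, ?_, ?_, ?_, ?_, ?_⟩
  · by_contra hlt
    push_neg at hlt
    have h0 : Nat.find hex = 0 := by omega
    have hf := Nat.find_spec hex
    rw [h0] at hf
    exact hf (CharPolyAux.N_zero hn)
  · exact Nat.find_le (CharPolyAux.N_n_pos hn hV hW).ne'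
  · intro q hq
    have hpos : 0 < CharPolyAux.N V W q :=
      lt_of_lt_of_le (Nat.pos_of_ne_zero (Nat.find_spec hex)) (CharPolyAux.N_mono V W hq)
    rw [CharPolyAux.P_eq V W q]
    constructor
    · exact Complex.natCast_im _
    · rw [Complex.natCast_re]
      exact_mod_cast hpos
  · intro q hq
    have h0 : CharPolyAux.N V W q = 0 := by
      by_contra h
      exact Nat.find_min hex hq h
    rw [CharPolyAux.P_eq V W q, h0, Nat.cast_zero]
  · intro hiso
    have h1 : CharPolyAux.N V W 1 = 0 := CharPolyAux.N_one_eq_zero hV hW hiso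
    have hf := Nat.find_spec hex
    by_contra hlt
    push_neg at hlt
    have : Nat.find hex = 0 ∨ Nat.find hex = 1 := by omega
    rcases this with h | h <;> rw [h] at hf
    · exact hf (CharPolyAux.N_zero hn)
    · exact hf h1
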